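/- For r > 0 and λ > 0, define u^λ(0) = ∫₀^∞ e^{-λt}[2 e^{-rt} g(t,0) + ∫₀^t 2r e^{-rs} g(s,0) ds] dt, where g(t,z) = e^{-z²/(4t)}/√(4πt). Then u^λ(0) = √(λ+r)/λ, and hence 1/u^λ(0) = λ/√(λ+r). -/

import Mathlib

open MeasureTheory Real Set

lemma keyIntegrable {μ : ℝ} (hμ : 0 < μ) :
    IntegrableOn (fun t => Real.exp (-μ * t) * (1 / Real.sqrt (4 * Real.pi * t))) (Ioi 0) := by
  have h := integrableOn_rpow_mul_exp_neg_mul_rpow (p := 1) (s := -(1/2)) (b := μ)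
    (by norm_num) zero_lt_one hμ
  have h2 : IntegrableOn
      (fun x : ℝ => 1 / Real.sqrt (4 * Real.pi) * (x ^ (-(1/2):ℝ) * Real.exp (-μ * x ^ (1:ℝ))))
      (Ioi 0) := h.const_mul _
  refine h2.congr_fun (fun t ht => ?_) measurableSet_Ioi
  have ht' : (0:ℝ) < t := ht
  dsimp only
  rw [Real.rpow_one]
  rw [Real.sqrt_mul (by positivity) t, Real.sqrt_eq_rpow t, Real.rpow_neg ht'.le]
  ring

lemma keyInt {μ : ℝ} (hμ : 0 < μ) :
    (∫ t in Ioi (0:ℝ), Real.exp (-μ * t) * (1 / Real.sqrt (4 * Real.pi * t)))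
      = 1 / (2 * Real.sqrt μ) := by
  have h : ∀ t ∈ Ioi (0:ℝ), Real.exp (-μ * t) * (1 / Real.sqrt (4 * Real.pi * t))
      = (1 / Real.sqrt (4 * Real.pi)) * (t ^ ((1/2 : ℝ) - 1) * Real.exp (-(μ * t))) := by
    intro t ht
    have ht' : (0:ℝ) < t := ht
    rw [Real.sqrt_mul (by positivity) t, Real.sqrt_eq_rpow t,
      show ((1/2:ℝ) - 1) = -(1/2) by norm_num, Real.rpow_neg ht'.le, neg_mul]
    ring
  rw [setIntegral_congr_fun measurableSet_Ioi h, integral_const_mul,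
    integral_rpow_mul_exp_neg_mul_Ioi (by norm_num) hμ, Real.Gamma_one_half_eq,
    ← Real.sqrt_eq_rpow, one_div μ, Real.sqrt_inv,
    show (4 * Real.pi) = 2^2 * Real.pi by ring, Real.sqrt_mul (by positivity),
    Real.sqrt_sq (by norm_num)]
  have h1 : Real.sqrt Real.pi ≠ 0 := by positivity
  have h2 : Real.sqrt μ ≠ 0 := by positivity
  field_simp

lemma expInt {l : ℝ} (hl : 0 < l) (s : ℝ) :
    (∫ t in Ioi s, Real.exp (-l * t)) = Real.exp (-l * s) / l := by
  have hderiv : ∀ t ∈ Ioi s, HasDerivAt (fun t => -Real.exp (-l * t) / l)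
      (Real.exp (-l * t)) t := by
    intro t _
    have h1 : HasDerivAt (fun t : ℝ => -l * t) (-l) t := by
      simpa using (hasDerivAt_id t).const_mul (-l)
    have h2 := (Real.hasDerivAt_exp (-l * t)).comp t h1
    have h3 := (h2.neg).div_const l
    refine h3.congr_deriv ?_
    field_simp
  have htend : Filter.Tendsto (fun t => -Real.exp (-l * t) / l) Filter.atTop (nhds 0) := by
    have h1 : Filter.Tendsto (fun t : ℝ => -l * t) Filter.atTop Filter.atBot := by
      exact Filter.tendsto_id.const_mul_atTop_of_neg (neg_neg_iff_pos.mpr hl)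
    have := (Real.tendsto_exp_atBot.comp h1).neg.div_const l
    simpa using this
  have hcont : ContinuousWithinAt (fun t => -Real.exp (-l * t) / l) (Ici s) s := by
    exact (((Real.continuous_exp.comp (continuous_const.mul continuous_id)).neg.div_const
      l).continuousAt).continuousWithinAt
  have := integral_Ioi_of_hasDerivAt_of_tendsto hcont hderiv
    (exp_neg_integrableOn_Ioi s hl) htend
  rw [this]
  field_simp
  ring

theorem resolvent_density_at_zero (r l : ℝ) (hr : 0 < r) (hl : 0 < l) :
    (∫ t in Ioi (0:ℝ), Real.exp (-l * t) *
        (2 * Real.exp (-r * t) * (1 / Real.sqrt (4 * Real.pi * t))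
          + ∫ s in Ioc (0:ℝ) t, 2 * r * Real.exp (-r * s) * (1 / Real.sqrt (4 * Real.pi * s))))
      = Real.sqrt (l + r) / l
    ∧ (Real.sqrt (l + r) / l)⁻¹ = l / Real.sqrt (l + r) := by
  constructor
  · set f : ℝ → ℝ := fun s => 2 * r * Real.exp (-r * s) * (1 / Real.sqrt (4 * Real.pi * s))
      with hf_def
    set F : ℝ → ℝ := fun t => ∫ s in Ioc (0:ℝ) t, f s with hF_def
    have hlr : 0 < l + r := by linarith
    have hfnonneg : ∀ s, 0 ≤ f s := by
      intro s; positivity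
    have hfint : IntegrableOn f (Ioi 0) := by
      have h : IntegrableOn (fun s : ℝ => 2 * r * (Real.exp (-r * s) * (1 / Real.sqrt (4 * Real.pi * s)))) (Ioi 0) :=
        (keyIntegrable hr).const_mul (2 * r)
      refine h.congr_fun (fun s _ => by ring) measurableSet_Ioi
    -- F is monotone, hence measurable
    have hFmono : Monotone F := by
      intro a b hab
      refine setIntegral_mono_set (hfint.mono_set Ioc_subset_Ioi_self)
        (Filter.Eventually.of_forall hfnonneg) (Filter.Eventually.of_forall ?_)
      exact fun x hx => Ioc_subset_Ioc_right hab hx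
    have hFnonneg : ∀ t, 0 ≤ F t := fun t =>
      setIntegral_nonneg measurableSet_Ioc (fun s _ => hfnonneg s)
    set C : ℝ := ∫ s in Ioi (0:ℝ), f s with hC_def
    have hCnonneg : 0 ≤ C := setIntegral_nonneg measurableSet_Ioi (fun s _ => hfnonneg s)
    have hFle : ∀ t, F t ≤ C := by
      intro t
      refine setIntegral_mono_set hfint (Filter.Eventually.of_forall hfnonneg)
        (Filter.Eventually.of_forall (fun x hx => Ioc_subset_Ioi_self hx))
    -- integrability of the two pieces
    have hA : IntegrableOn
        (fun t => Real.exp (-l * t) * (2 * Real.exp (-r * t) * (1 / Real.sqrt (4 * Real.pi * t))))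
        (Ioi 0) := by
      have h : IntegrableOn (fun t : ℝ => 2 * (Real.exp (-(l + r) * t) * (1 / Real.sqrt (4 * Real.pi * t)))) (Ioi 0) :=
        (keyIntegrable hlr).const_mul 2
      refine h.congr_fun (fun t _ => ?_) measurableSet_Ioi
      dsimp only
      rw [show (-(l + r) * t) = -l * t + -r * t by ring, Real.exp_add]
      ring
    have hB : IntegrableOn (fun t => Real.exp (-l * t) * F t) (Ioi 0) := by
      refine Integrable.mono ((exp_neg_integrableOn_Ioi 0 hl).mul_const C)
        (((Real.measurable_exp.comp (measurable_const.mul measurable_id)).mul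
          hFmono.measurable).aestronglyMeasurable) ?_
      rw [ae_restrict_iff' measurableSet_Ioi]
      refine Filter.Eventually.of_forall (fun t _ => ?_)
      rw [Real.norm_eq_abs, Real.norm_eq_abs,
        abs_of_nonneg (mul_nonneg (Real.exp_pos _).le (hFnonneg t))]
      exact le_trans (mul_le_mul_of_nonneg_left (hFle t) (Real.exp_pos _).le) (le_abs_self _)
    -- split the integral
    have hsplit : (∫ t in Ioi (0:ℝ), Real.exp (-l * t) *
          (2 * Real.exp (-r * t) * (1 / Real.sqrt (4 * Real.pi * t)) + F t))
        = (∫ t in Ioi (0:ℝ),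
            Real.exp (-l * t) * (2 * Real.exp (-r * t) * (1 / Real.sqrt (4 * Real.pi * t))))
          + ∫ t in Ioi (0:ℝ), Real.exp (-l * t) * F t := by
      rw [← integral_add hA hB]
      exact setIntegral_congr_fun measurableSet_Ioi (fun t _ => by ring)
    -- first piece
    have hfirst : (∫ t in Ioi (0:ℝ),
          Real.exp (-l * t) * (2 * Real.exp (-r * t) * (1 / Real.sqrt (4 * Real.pi * t))))
        = 1 / Real.sqrt (l + r) := by
      have heq : ∀ t ∈ Ioi (0:ℝ),
          Real.exp (-l * t) * (2 * Real.exp (-r * t) * (1 / Real.sqrt (4 * Real.pi * t)))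
            = 2 * (Real.exp (-(l + r) * t) * (1 / Real.sqrt (4 * Real.pi * t))) := by
        intro t _
        rw [show (-(l + r) * t) = -l * t + -r * t by ring, Real.exp_add]; ring
      rw [setIntegral_congr_fun measurableSet_Ioi heq, integral_const_mul, keyInt hlr]
      have : Real.sqrt (l + r) ≠ 0 := by positivity
      field_simp
    -- second piece via Fubini
    have hsecond : (∫ t in Ioi (0:ℝ), Real.exp (-l * t) * F t)
        = r / (l * Real.sqrt (l + r)) := by
      set μ : Measure ℝ := volume.restrict (Ioi 0) with hμ_def
      set base : ℝ × ℝ → ℝ := fun p => Real.exp (-l * p.1) * f p.2 with hbase_def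
      have hbase : Integrable base (μ.prod μ) := by
        exact Integrable.mul_prod (exp_neg_integrableOn_Ioi 0 hl) hfint
      set H : ℝ × ℝ → ℝ := {p : ℝ × ℝ | p.2 ≤ p.1}.indicator base with hH_def
      have hHset : MeasurableSet {p : ℝ × ℝ | p.2 ≤ p.1} :=
        measurableSet_le measurable_snd measurable_fst
      have hH : Integrable H (μ.prod μ) := hbase.indicator hHset
      have hswap : (∫ t, ∫ s, H (t, s) ∂μ ∂μ) = ∫ s, ∫ t, H (t, s) ∂μ ∂μ :=
        integral_integral_swap (by exact hH)
      have hLHS : (∫ t, ∫ s, H (t, s) ∂μ ∂μ) = ∫ t in Ioi (0:ℝ), Real.exp (-l * t) * F t := by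
        refine setIntegral_congr_fun measurableSet_Ioi (fun t _ => ?_)
        have h1 : ∀ s, H (t, s) = (Iic t).indicator (fun s => Real.exp (-l * t) * f s) s := by
          intro s
          by_cases h : s ≤ t <;> simp [hH_def, hbase_def, Set.indicator, h]
        simp_rw [h1]
        rw [integral_indicator measurableSet_Iic, hμ_def,
          Measure.restrict_restrict measurableSet_Iic, Set.inter_comm, Ioi_inter_Iic,
          integral_const_mul]
      have hexpint : ∀ s : ℝ, 0 < s → (∫ t in Ioi (0:ℝ), H (t, s)) = f s * (Real.exp (-l * s) / l) := by
        intro s hs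
        have h1 : ∀ t, H (t, s) = (Ici s).indicator (fun t => Real.exp (-l * t) * f s) t := by
          intro t
          by_cases h : s ≤ t <;> simp [hH_def, hbase_def, Set.indicator, h]
        simp_rw [h1]
        rw [integral_indicator measurableSet_Ici,
          Measure.restrict_restrict measurableSet_Ici,
          show Ici s ∩ Ioi 0 = Ici s from
            Set.inter_eq_left.mpr (fun x hx => lt_of_lt_of_le hs hx),
          integral_Ici_eq_integral_Ioi, integral_mul_const, expInt hl s, mul_comm]
      have hRHS : (∫ s, ∫ t, H (t, s) ∂μ ∂μ) = r / (l * Real.sqrt (l + r)) := by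
        rw [hμ_def]
        have heq : ∀ s ∈ Ioi (0:ℝ), (∫ t in Ioi (0:ℝ), H (t, s))
            = (2 * r / l) * (Real.exp (-(l + r) * s) * (1 / Real.sqrt (4 * Real.pi * s))) := by
          intro s hs
          rw [hexpint s hs, hf_def]
          rw [show (-(l + r) * s) = -r * s + -l * s by ring, Real.exp_add]
          field_simp
        rw [setIntegral_congr_fun measurableSet_Ioi heq, integral_const_mul, keyInt hlr]
        have h1 : Real.sqrt (l + r) ≠ 0 := by positivity
        field_simp
      rw [← hLHS, hswap]; exact hRHS
    rw [hsplit, hfirst, hsecond]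
    have h1 : Real.sqrt (l + r) ≠ 0 := by positivity
    have h2 : Real.sqrt (l + r) * Real.sqrt (l + r) = l + r := Real.mul_self_sqrt hlr.le
    field_simp
    nlinarith [h2]
  · rw [inv_div]
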